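/- Let L : ℝ → ℝ and q : ℝ → ℝ be convex functions and let ν ≥ 0. Then the objective function of problem (P), namely F(U, v) = Σ_{i=1}^m L(y_i · Σ_{j=1}^N s_j · q(⟨u_j, x_i⟩ − v_j)) + (ν/2)·‖v‖₂², is a DC function on ℝ^{n×N} × ℝ^N: there exist convex functions g, h : ℝ^{n×N} × ℝ^N → ℝ such that F(U, v) = g(U, v) − h(U, v) for all (U, v). -/

import Mathlib

open Set


/-- A convex function on `ℝ` has a subgradient at `0`. -/
lemma exists_subgrad (f : ℝ → ℝ) (hf : ConvexOn ℝ Set.univ f) :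
    ∃ c : ℝ, ∀ t, f 0 + c * t ≤ f t := by
  have hslope : ∀ u v w : ℝ, u < v → v < w →
      (f v - f u) / (v - u) ≤ (f w - f v) / (w - v) := fun u v w h1 h2 =>
    hf.slope_mono_adjacent (Set.mem_univ u) (Set.mem_univ w) h1 h2
  set S : Set ℝ := (fun t => (f t - f 0) / t) '' Set.Ioi (0 : ℝ) with hS
  have hne : S.Nonempty := ⟨_, ⟨1, by norm_num, rfl⟩⟩
  have hbdd : BddBelow S := by
    refine ⟨(f 0 - f (-1)) / 1, ?_⟩
    rintro r ⟨t, ht, rfl⟩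
    have := hslope (-1) 0 t (by norm_num) ht
    simpa using this
  refine ⟨sInf S, fun t => ?_⟩
  rcases lt_trichotomy t 0 with h | h | h
  · have hle : (f 0 - f t) / (0 - t) ≤ sInf S := by
      apply le_csInf hne
      rintro r ⟨u, hu, rfl⟩
      have := hslope t 0 u h hu
      simpa using this
    rw [zero_sub, div_le_iff₀ (by linarith : (0:ℝ) < -t)] at hle
    nlinarith [hle]
  · simp [h]
  · have hle : sInf S ≤ (f t - f 0) / t := csInf_le hbdd ⟨t, h, rfl⟩
    rw [le_div_iff₀ h] at hle
    linarith


lemma pair_ineq (φ : ℝ → ℝ) (hφ : ConvexOn ℝ Set.univ φ) {X b B : ℝ}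
    (hb : 0 ≤ b) (hbB : b ≤ B) :
    φ (X - b) + φ (X + b) ≤ φ (X - B) + φ (X + B) := by
  rcases eq_or_lt_of_le (hb.trans hbB) with hB | hB
  · have hb0 : b = 0 := le_antisymm (hbB.trans hB.symm.le) hb
    have hB0 : B = 0 := hB.symm
    rw [hb0, hB0]
  · have hBne : B ≠ 0 := ne_of_gt hB
    set u := (B + b) / (2 * B) with hu
    have hu0 : 0 ≤ u := div_nonneg (by linarith) (by linarith)
    have hu1 : 0 ≤ 1 - u := by
      have : u ≤ 1 := by rw [hu, div_le_one (by linarith)]; linarith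
      linarith
    have hsum : u + (1 - u) = 1 := by ring
    have h1 := hφ.2 (Set.mem_univ (X + B)) (Set.mem_univ (X - B)) hu0 hu1 hsum
    have h2 := hφ.2 (Set.mem_univ (X - B)) (Set.mem_univ (X + B)) hu0 hu1 hsum
    have e1 : u • (X + B) + (1 - u) • (X - B) = X + b := by
      simp only [smul_eq_mul, hu]; field_simp; ring
    have e2 : u • (X - B) + (1 - u) • (X + B) = X - b := by
      simp only [smul_eq_mul, hu]; field_simp; ring
    rw [e1] at h1; rw [e2] at h2
    simp only [smul_eq_mul] at h1 h2
    linarith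

lemma convexOn_comp_mono {E : Type*} [AddCommGroup E] [Module ℝ E]
    (φ : ℝ → ℝ) (f : E → ℝ) (hφ : ConvexOn ℝ Set.univ φ) (hm : Monotone φ)
    (hf : ConvexOn ℝ Set.univ f) : ConvexOn ℝ Set.univ (fun z => φ (f z)) := by
  refine ⟨convex_univ, fun z1 _ z2 _ a b ha hb hab => ?_⟩
  have h1 : φ (f (a • z1 + b • z2)) ≤ φ (a • f z1 + b • f z2) :=
    hm (hf.2 (Set.mem_univ _) (Set.mem_univ _) ha hb hab)
  exact h1.trans (hφ.2 (Set.mem_univ _) (Set.mem_univ _) ha hb hab)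

lemma main_convex {E : Type*} [AddCommGroup E] [Module ℝ E]
    (φ : ℝ → ℝ) (p q : E → ℝ) (hφ : ConvexOn ℝ Set.univ φ) (hm : Monotone φ)
    (hp : ConvexOn ℝ Set.univ p) (hq : ConvexOn ℝ Set.univ q) (hq0 : ∀ z, 0 ≤ q z) :
    ConvexOn ℝ Set.univ (fun z => φ (p z - q z) + φ (p z + q z)) := by
  refine ⟨convex_univ, fun z1 _ z2 _ a b ha hb hab => ?_⟩
  simp only [smul_eq_mul]
  have hX : p (a • z1 + b • z2) ≤ a * p z1 + b * p z2 := by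
    have := hp.2 (Set.mem_univ z1) (Set.mem_univ z2) ha hb hab
    simpa [smul_eq_mul] using this
  have hY : q (a • z1 + b • z2) ≤ a * q z1 + b * q z2 := by
    have := hq.2 (Set.mem_univ z1) (Set.mem_univ z2) ha hb hab
    simpa [smul_eq_mul] using this
  have hY0 : 0 ≤ q (a • z1 + b • z2) := hq0 _
  set X := p (a • z1 + b • z2)
  set Y := q (a • z1 + b • z2)
  set Pb := a * p z1 + b * p z2 with hPb
  set Qb := a * q z1 + b * q z2 with hQb
  have step1 : φ (X - Y) + φ (X + Y) ≤ φ (Pb - Y) + φ (Pb + Y) :=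
    add_le_add (hm (by linarith)) (hm (by linarith))
  have step2 : φ (Pb - Y) + φ (Pb + Y) ≤ φ (Pb - Qb) + φ (Pb + Qb) :=
    pair_ineq φ hφ hY0 hY
  have c1 : φ (Pb - Qb) ≤ a * φ (p z1 - q z1) + b * φ (p z2 - q z2) := by
    have h := hφ.2 (Set.mem_univ (p z1 - q z1)) (Set.mem_univ (p z2 - q z2)) ha hb hab
    simp only [smul_eq_mul] at h
    have e : a * (p z1 - q z1) + b * (p z2 - q z2) = Pb - Qb := by rw [hPb, hQb]; ring
    rwa [e] at h
  have c2 : φ (Pb + Qb) ≤ a * φ (p z1 + q z1) + b * φ (p z2 + q z2) := by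
    have h := hφ.2 (Set.mem_univ (p z1 + q z1)) (Set.mem_univ (p z2 + q z2)) ha hb hab
    simp only [smul_eq_mul] at h
    have e : a * (p z1 + q z1) + b * (p z2 + q z2) = Pb + Qb := by rw [hPb, hQb]; ring
    rwa [e] at h
  linarith


lemma mono_on_nonneg (f : ℝ → ℝ) (hf : ConvexOn ℝ Set.univ f)
    (hnn : ∀ t, 0 ≤ f t) (h0 : f 0 = 0) :
    ∀ s t : ℝ, 0 ≤ s → s ≤ t → f s ≤ f t := by
  intro s t hs hst
  rcases eq_or_lt_of_le hst with rfl | h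
  · exact le_refl _
  have ht : 0 < t := lt_of_le_of_lt hs h
  have h1 : (0:ℝ) ≤ s / t := div_nonneg hs ht.le
  have h2 : s / t ≤ 1 := (div_le_one ht).mpr hst
  have key := hf.2 (Set.mem_univ (0:ℝ)) (Set.mem_univ t)
    (by linarith : (0:ℝ) ≤ 1 - s / t) h1 (by ring)
  have e : (1 - s / t) • (0:ℝ) + (s / t) • t = s := by
    rw [smul_eq_mul, smul_eq_mul, mul_zero, zero_add, div_mul_cancel₀ s ht.ne']
  rw [e] at key
  simp only [smul_eq_mul, h0, mul_zero, zero_add] at key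
  have : s / t * f t ≤ f t := by nlinarith [hnn t]
  linarith

lemma phi_mono (f : ℝ → ℝ) (hf : ConvexOn ℝ Set.univ f)
    (hnn : ∀ t, 0 ≤ f t) (h0 : f 0 = 0) :
    Monotone (fun t => f (max t 0)) := fun s t hst =>
  mono_on_nonneg f hf hnn h0 _ _ (le_max_right s 0) (max_le_max hst (le_refl 0))

lemma phi_convex (f : ℝ → ℝ) (hf : ConvexOn ℝ Set.univ f)
    (hnn : ∀ t, 0 ≤ f t) (h0 : f 0 = 0) :
    ConvexOn ℝ Set.univ (fun t => f (max t 0)) := by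
  refine ⟨convex_univ, fun t1 _ t2 _ a b ha hb hab => ?_⟩
  simp only [smul_eq_mul]
  have h1 : max (a * t1 + b * t2) 0 ≤ a * max t1 0 + b * max t2 0 := by
    apply max_le
    · exact add_le_add (mul_le_mul_of_nonneg_left (le_max_left t1 0) ha)
        (mul_le_mul_of_nonneg_left (le_max_left t2 0) hb)
    · have : 0 ≤ a * max t1 0 := mul_nonneg ha (le_max_right t1 0)
      have : 0 ≤ b * max t2 0 := mul_nonneg hb (le_max_right t2 0)
      linarith [mul_nonneg ha (le_max_right t1 0)]
  have h2 : f (max (a * t1 + b * t2) 0) ≤ f (a * max t1 0 + b * max t2 0) :=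
    mono_on_nonneg f hf hnn h0 _ _ (le_max_right _ 0) h1
  have h3 := hf.2 (Set.mem_univ (max t1 0)) (Set.mem_univ (max t2 0)) ha hb hab
  simp only [smul_eq_mul] at h3
  linarith

lemma split_id (f : ℝ → ℝ) (h0 : f 0 = 0) (t : ℝ) :
    f (max t 0) + f (-(max (-t) 0)) = f t := by
  rcases le_total t 0 with h | h
  · rw [max_eq_right h, max_eq_left (by linarith : (0:ℝ) ≤ -t)]
    simp [h0]
  · rw [max_eq_left h, max_eq_right (by linarith : -t ≤ (0:ℝ))]
    simp [h0]

lemma convexOn_neg_comp (f : ℝ → ℝ) (hf : ConvexOn ℝ Set.univ f) :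
    ConvexOn ℝ Set.univ (fun t => f (-t)) := by
  refine ⟨convex_univ, fun t1 _ t2 _ a b ha hb hab => ?_⟩
  have h := hf.2 (Set.mem_univ (-t1)) (Set.mem_univ (-t2)) ha hb hab
  have e : a • (-t1) + b • (-t2) = -(a • t1 + b • t2) := by
    simp only [smul_eq_mul]; ring
  rwa [e] at h

lemma convexOn_sum' {E : Type*} [AddCommGroup E] [Module ℝ E] {ι : Type*}
    (t : Finset ι) (f : ι → E → ℝ)
    (h : ∀ i ∈ t, ConvexOn ℝ Set.univ (f i)) :
    ConvexOn ℝ Set.univ (fun z => ∑ i ∈ t, f i z) := by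
  classical
  induction t using Finset.induction_on with
  | empty => simpa using convexOn_const (0:ℝ) convex_univ
  | @insert a s ha ih =>
      simp only [Finset.sum_insert ha]
      exact (h a (Finset.mem_insert_self _ _)).add
        (ih fun i hi => h i (Finset.mem_insert_of_mem hi))

lemma convexOn_comp_comb {E : Type*} [AddCommGroup E] [Module ℝ E]
    (f : ℝ → ℝ) (hf : ConvexOn ℝ Set.univ f) (ℓ : E → ℝ)
    (hcomb : ∀ (a b : ℝ) (z1 z2 : E), ℓ (a • z1 + b • z2) = a * ℓ z1 + b * ℓ z2) :
    ConvexOn ℝ Set.univ (fun z => f (ℓ z)) := by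
  refine ⟨convex_univ, fun z1 _ z2 _ a b ha hb hab => ?_⟩
  show f (ℓ (a • z1 + b • z2)) ≤ a • f (ℓ z1) + b • f (ℓ z2)
  rw [hcomb]
  have h := hf.2 (Set.mem_univ (ℓ z1)) (Set.mem_univ (ℓ z2)) ha hb hab
  simpa [smul_eq_mul] using h

lemma convexOn_affine_comb {E : Type*} [AddCommGroup E] [Module ℝ E]
    (ℓ : E → ℝ)
    (hcomb : ∀ (a b : ℝ), a + b = 1 → ∀ z1 z2 : E,
      ℓ (a • z1 + b • z2) = a * ℓ z1 + b * ℓ z2) :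
    ConvexOn ℝ Set.univ ℓ := by
  refine ⟨convex_univ, fun z1 _ z2 _ a b ha hb hab => ?_⟩
  show ℓ (a • z1 + b • z2) ≤ a • ℓ z1 + b • ℓ z2
  rw [hcomb a b hab]
  simp [smul_eq_mul]


/-- For convex `L`, convex `q`, and `ν ≥ 0`, the objective of problem (P),
`F(U, v) = ∑ i, L (y i * ∑ j, s j * q (⟨u j, x i⟩ - v j)) + (ν/2) * ‖v‖₂²`,
is a DC function on `ℝ^{n×N} × ℝ^N`: it is the difference of two convex functions. -/
theorem stmt_0
    (n N m : ℕ)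
    (x : Fin m → Fin n → ℝ) (y : Fin m → ℝ)
    (hy : ∀ i, y i = 1 ∨ y i = -1)
    (s : Fin N → ℝ)
    (hs : ∀ j, s j = 1 ∨ s j = -1)
    (L q : ℝ → ℝ)
    (hL : ConvexOn ℝ Set.univ L)
    (hq : ConvexOn ℝ Set.univ q)
    (ν : ℝ) (hν : 0 ≤ ν) :
    ∃ g h : (Fin N → Fin n → ℝ) × (Fin N → ℝ) → ℝ,
      ConvexOn ℝ Set.univ g ∧ ConvexOn ℝ Set.univ h ∧
      ∀ U : Fin N → Fin n → ℝ, ∀ v : Fin N → ℝ,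
        (∑ i, L (y i * ∑ j, s j * q ((∑ k, U j k * x i k) - v j))
            + ν / 2 * ∑ j, (v j) ^ 2)
          = g (U, v) - h (U, v) := by
  classical
  obtain ⟨cq, hcq⟩ := exists_subgrad q hq
  obtain ⟨cL, hcL⟩ := exists_subgrad L hL
  -- shifted nonnegative parts
  set q0 : ℝ → ℝ := fun t => q t - (q 0 + cq * t) with hq0_def
  set L0 : ℝ → ℝ := fun t => L t - (L 0 + cL * t) with hL0_def
  have hq0conv : ConvexOn ℝ Set.univ q0 := by
    have haff : ConvexOn ℝ Set.univ (fun t : ℝ => -(q 0 + cq * t)) := by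
      refine convexOn_affine_comb _ fun a b hab z1 z2 => ?_
      simp only [smul_eq_mul]
      have hb' : b = 1 - a := by linarith
      subst hb'; ring
    have e : q0 = fun t => q t + -(q 0 + cq * t) := by
      funext t; rw [hq0_def]; ring
    rw [e]; exact hq.add haff
  have hL0conv : ConvexOn ℝ Set.univ L0 := by
    have haff : ConvexOn ℝ Set.univ (fun t : ℝ => -(L 0 + cL * t)) := by
      refine convexOn_affine_comb _ fun a b hab z1 z2 => ?_
      simp only [smul_eq_mul]
      have hb' : b = 1 - a := by linarith
      subst hb'; ring
    have e : L0 = fun t => L t + -(L 0 + cL * t) := by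
      funext t; rw [hL0_def]; ring
    rw [e]; exact hL.add haff
  have hq0nn : ∀ t, 0 ≤ q0 t := fun t => by
    rw [hq0_def]; simp only []; linarith [hcq t]
  have hL0nn : ∀ t, 0 ≤ L0 t := fun t => by
    rw [hL0_def]; simp only []; linarith [hcL t]
  have hL00 : L0 0 = 0 := by rw [hL0_def]; simp
  -- monotone split of L0
  set L0n : ℝ → ℝ := fun t => L0 (-t) with hL0n_def
  have hL0nconv : ConvexOn ℝ Set.univ L0n := convexOn_neg_comp L0 hL0conv
  have hL0nnn : ∀ t, 0 ≤ L0n t := fun t => hL0nn (-t)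
  have hL0n0 : L0n 0 = 0 := by rw [hL0n_def]; simpa using hL00
  set φ : ℝ → ℝ := fun t => L0 (max t 0) with hφ_def
  set ψ : ℝ → ℝ := fun t => L0n (max t 0) with hψ_def
  have hφconv : ConvexOn ℝ Set.univ φ := phi_convex L0 hL0conv hL0nn hL00
  have hφmono : Monotone φ := phi_mono L0 hL0conv hL0nn hL00
  have hψconv : ConvexOn ℝ Set.univ ψ := phi_convex L0n hL0nconv hL0nnn hL0n0
  have hψmono : Monotone ψ := phi_mono L0n hL0nconv hL0nnn hL0n0
  have hsplit : ∀ t, φ t + ψ (-t) = L0 t := fun t => split_id L0 hL00 t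
  have hLdecomp : ∀ t, L t = L0 t + cL * t + L 0 := fun t => by
    rw [hL0_def]; ring
  set cp : ℝ := max cL 0 with hcp_def
  set cm : ℝ := max (-cL) 0 with hcm_def
  have hcp : 0 ≤ cp := le_max_right _ _
  have hcm : 0 ≤ cm := le_max_right _ _
  have hcpm : cp - cm = cL := by
    rcases le_total 0 cL with h | h
    · rw [hcp_def, hcm_def, max_eq_left h, max_eq_right (by linarith : -cL ≤ (0:ℝ))]; ring
    · rw [hcp_def, hcm_def, max_eq_right h, max_eq_left (by linarith : (0:ℝ) ≤ -cL)]; ring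
  -- the linear maps
  set w : Fin m → Fin N → (Fin N → Fin n → ℝ) × (Fin N → ℝ) → ℝ :=
    fun i j z => (∑ k, z.1 j k * x i k) - z.2 j with hw_def
  have hw_comb : ∀ i j (a b : ℝ) z1 z2,
      w i j (a • z1 + b • z2) = a * w i j z1 + b * w i j z2 := by
    intro i j a b z1 z2
    rw [hw_def]
    simp only [Prod.smul_fst, Prod.smul_snd, Prod.fst_add, Prod.snd_add,
      Pi.add_apply, Pi.smul_apply, smul_eq_mul]
    have hsum : (∑ k, (a * z1.1 j k + b * z2.1 j k) * x i k)
        = a * (∑ k, z1.1 j k * x i k) + b * (∑ k, z2.1 j k * x i k) := by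
      rw [Finset.mul_sum, Finset.mul_sum, ← Finset.sum_add_distrib]
      exact Finset.sum_congr rfl fun k _ => by ring
    rw [hsum]; ring
  have hσ : ∀ (i : Fin m) (j : Fin N), y i * s j = 1 ∨ y i * s j = -1 := by
    intro i j
    rcases hy i with h | h <;> rcases hs j with h' | h' <;> rw [h, h'] <;> norm_num
  set P : Fin m → (Fin N → Fin n → ℝ) × (Fin N → ℝ) → ℝ :=
    fun i z => ∑ j ∈ Finset.univ.filter (fun j => y i * s j = 1), q0 (w i j z) with hP_def
  set Nf : Fin m → (Fin N → Fin n → ℝ) × (Fin N → ℝ) → ℝ :=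
    fun i z => ∑ j ∈ Finset.univ.filter (fun j => ¬(y i * s j = 1)), q0 (w i j z) with hNf_def
  set A : Fin m → (Fin N → Fin n → ℝ) × (Fin N → ℝ) → ℝ :=
    fun i z => ∑ j, (y i * s j) * (cq * w i j z + q 0) with hA_def
  have hq0w : ∀ i j, ConvexOn ℝ Set.univ (fun z => q0 (w i j z)) := fun i j =>
    convexOn_comp_comb q0 hq0conv (w i j) (hw_comb i j)
  have hPconv : ∀ i, ConvexOn ℝ Set.univ (P i) := fun i => by
    rw [hP_def]; exact convexOn_sum' _ _ fun j _ => hq0w i j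
  have hNconv : ∀ i, ConvexOn ℝ Set.univ (Nf i) := fun i => by
    rw [hNf_def]; exact convexOn_sum' _ _ fun j _ => hq0w i j
  have hPnn : ∀ i z, 0 ≤ P i z := fun i z => by
    rw [hP_def]; exact Finset.sum_nonneg fun j _ => hq0nn _
  have hNnn : ∀ i z, 0 ≤ Nf i z := fun i z => by
    rw [hNf_def]; exact Finset.sum_nonneg fun j _ => hq0nn _
  have hA_comb : ∀ i (a b : ℝ), a + b = 1 → ∀ z1 z2,
      A i (a • z1 + b • z2) = a * A i z1 + b * A i z2 := by
    intro i a b hab z1 z2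
    rw [hA_def]
    simp only []
    rw [Finset.mul_sum, Finset.mul_sum, ← Finset.sum_add_distrib]
    refine Finset.sum_congr rfl fun j _ => ?_
    rw [hw_comb i j a b z1 z2]
    have hb' : b = 1 - a := by linarith
    subst hb'; ring
  have hAconv : ∀ i, ConvexOn ℝ Set.univ (A i) := fun i =>
    convexOn_affine_comb (A i) (hA_comb i)
  have hAnegconv : ∀ i, ConvexOn ℝ Set.univ (fun z => -(A i z)) := fun i => by
    refine convexOn_affine_comb _ fun a b hab z1 z2 => ?_
    rw [hA_comb i a b hab z1 z2]; ring
  have hNAconv : ∀ i, ConvexOn ℝ Set.univ (fun z => Nf i z - A i z) := fun i => by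
    have e : (fun z => Nf i z - A i z) = fun z => Nf i z + -(A i z) := by
      funext z; ring
    rw [e]; exact (hNconv i).add (hAnegconv i)
  -- the two witnesses
  refine ⟨fun z => (∑ i, ((φ (P i z + A i z - Nf i z) + φ (P i z + A i z + Nf i z))
        + (ψ (Nf i z - A i z - P i z) + ψ (Nf i z - A i z + P i z))
        + (cp * P i z + cm * Nf i z) + (cL * A i z + L 0)))
      + ν / 2 * ∑ j, (z.2 j) ^ 2,
    fun z => ∑ i, (φ (P i z + A i z + Nf i z) + ψ (Nf i z - A i z + P i z)
        + (cp * Nf i z + cm * P i z)), ?_, ?_, ?_⟩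
  · -- convexity of g
    have perI : ∀ i : Fin m, ConvexOn ℝ Set.univ
        (fun z => (φ (P i z + A i z - Nf i z) + φ (P i z + A i z + Nf i z))
          + (ψ (Nf i z - A i z - P i z) + ψ (Nf i z - A i z + P i z))
          + (cp * P i z + cm * Nf i z) + (cL * A i z + L 0)) := by
      intro i
      have t1 := main_convex φ (fun z => P i z + A i z) (Nf i) hφconv hφmono
        ((hPconv i).add (hAconv i)) (hNconv i) (hNnn i)
      have t2 := main_convex ψ (fun z => Nf i z - A i z) (P i) hψconv hψmono
        (hNAconv i) (hPconv i) (hPnn i)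
      have t3 := (ConvexOn.smul hcp (hPconv i)).add (ConvexOn.smul hcm (hNconv i))
      have t4 : ConvexOn ℝ Set.univ (fun z => cL * A i z + L 0) := by
        refine convexOn_affine_comb _ fun a b hab z1 z2 => ?_
        rw [hA_comb i a b hab z1 z2]
        have hb' : b = 1 - a := by linarith
        subst hb'; ring
      exact ((t1.add t2).add t3).add t4
    have hnu : ConvexOn ℝ Set.univ
        (fun z : (Fin N → Fin n → ℝ) × (Fin N → ℝ) => ν / 2 * ∑ j, (z.2 j) ^ 2) := by
      have h2 : ConvexOn ℝ Set.univ
          (fun z : (Fin N → Fin n → ℝ) × (Fin N → ℝ) => ∑ j, (z.2 j) ^ 2) := by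
        refine convexOn_sum' Finset.univ (fun (j : Fin N) (z : (Fin N → Fin n → ℝ) × (Fin N → ℝ)) => (z.2 j) ^ 2) fun j _ => ?_
        refine convexOn_comp_comb (fun t => t ^ 2) (Even.convexOn_pow even_two)
          (fun z : (Fin N → Fin n → ℝ) × (Fin N → ℝ) => z.2 j) ?_
        intro a b z1 z2
        simp [Prod.smul_snd, Prod.snd_add, Pi.add_apply, Pi.smul_apply, smul_eq_mul]
      exact ConvexOn.smul (by linarith : (0:ℝ) ≤ ν / 2) h2
    exact (convexOn_sum' Finset.univ _ (fun i _ => perI i)).add hnu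
  · -- convexity of h
    have perIh : ∀ i : Fin m, ConvexOn ℝ Set.univ
        (fun z => φ (P i z + A i z + Nf i z) + ψ (Nf i z - A i z + P i z)
          + (cp * Nf i z + cm * P i z)) := by
      intro i
      have t1 := convexOn_comp_mono φ (fun z => P i z + A i z + Nf i z) hφconv hφmono
        (((hPconv i).add (hAconv i)).add (hNconv i))
      have t2 := convexOn_comp_mono ψ (fun z => Nf i z - A i z + P i z) hψconv hψmono
        ((hNAconv i).add (hPconv i))
      have t3 := (ConvexOn.smul hcp (hNconv i)).add (ConvexOn.smul hcm (hPconv i))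
      exact (t1.add t2).add t3
    exact convexOn_sum' Finset.univ _ (fun i _ => perIh i)
  · -- the identity
    intro U v
    simp only []
    have harg : ∀ i : Fin m, y i * ∑ j, s j * q ((∑ k, U j k * x i k) - v j)
        = P i (U, v) - Nf i (U, v) + A i (U, v) := by
      intro i
      have hwv : ∀ j, w i j (U, v) = (∑ k, U j k * x i k) - v j := fun j => by rw [hw_def]
      have hterm : ∀ j : Fin N, y i * (s j * q ((∑ k, U j k * x i k) - v j))
          = (y i * s j) * q0 (w i j (U, v)) + (y i * s j) * (cq * w i j (U, v) + q 0) := by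
        intro j
        rw [hwv j]
        simp only [hq0_def]
        ring
      calc y i * ∑ j, s j * q ((∑ k, U j k * x i k) - v j)
          = ∑ j, ((y i * s j) * q0 (w i j (U, v)) + (y i * s j) * (cq * w i j (U, v) + q 0)) := by
            rw [Finset.mul_sum]
            exact Finset.sum_congr rfl fun j _ => hterm j
        _ = (∑ j, (y i * s j) * q0 (w i j (U, v))) + A i (U, v) := by
            rw [Finset.sum_add_distrib, hA_def]
        _ = P i (U, v) - Nf i (U, v) + A i (U, v) := by
            congr 1
            rw [← Finset.sum_filter_add_sum_filter_not Finset.univ (fun j => y i * s j = 1)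
              (fun j => (y i * s j) * q0 (w i j (U, v)))]
            rw [hP_def, hNf_def]
            simp only []
            rw [sub_eq_add_neg]
            congr 1
            · refine Finset.sum_congr rfl fun j hj => ?_
              rw [(Finset.mem_filter.mp hj).2, one_mul]
            · rw [← Finset.sum_neg_distrib]
              refine Finset.sum_congr rfl fun j hj => ?_
              have hj' := (Finset.mem_filter.mp hj).2
              have hone : y i * s j = -1 := (hσ i j).resolve_left hj'
              rw [hone]; ring
    have key : ∀ i : Fin m, L (y i * ∑ j, s j * q ((∑ k, U j k * x i k) - v j))
        = (((φ (P i (U,v) + A i (U,v) - Nf i (U,v)) + φ (P i (U,v) + A i (U,v) + Nf i (U,v)))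
          + (ψ (Nf i (U,v) - A i (U,v) - P i (U,v)) + ψ (Nf i (U,v) - A i (U,v) + P i (U,v)))
          + (cp * P i (U,v) + cm * Nf i (U,v)) + (cL * A i (U,v) + L 0))
        - (φ (P i (U,v) + A i (U,v) + Nf i (U,v)) + ψ (Nf i (U,v) - A i (U,v) + P i (U,v))
          + (cp * Nf i (U,v) + cm * P i (U,v)))) := by
      intro i
      rw [harg i]
      set Pv := P i (U, v) with hPv
      set Nv := Nf i (U, v) with hNv
      set Av := A i (U, v) with hAv
      have e1 : Pv + Av - Nv = Pv - Nv + Av := by ring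
      have e2 : Nv - Av - Pv = -(Pv - Nv + Av) := by ring
      rw [e1, e2]
      have h1 := hsplit (Pv - Nv + Av)
      have h2 := hLdecomp (Pv - Nv + Av)
      linear_combination h2 - h1 - (Pv - Nv) * hcpm
    rw [show (∑ i, L (y i * ∑ j, s j * q ((∑ k, U j k * x i k) - v j)))
        = ∑ i : Fin m, (((φ (P i (U,v) + A i (U,v) - Nf i (U,v)) + φ (P i (U,v) + A i (U,v) + Nf i (U,v)))
          + (ψ (Nf i (U,v) - A i (U,v) - P i (U,v)) + ψ (Nf i (U,v) - A i (U,v) + P i (U,v)))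
          + (cp * P i (U,v) + cm * Nf i (U,v)) + (cL * A i (U,v) + L 0))
        - (φ (P i (U,v) + A i (U,v) + Nf i (U,v)) + ψ (Nf i (U,v) - A i (U,v) + P i (U,v))
          + (cp * Nf i (U,v) + cm * P i (U,v)))) from Finset.sum_congr rfl fun i _ => key i]
    rw [Finset.sum_sub_distrib]
    ring
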